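/- Let d be an odd integer ≥ 2 and a, b ∈ ℤ/dℤ, and let δ be a generator of the ideal generated by a and b (a gcd of a and b). Then there exist units u, v of ℤ/dℤ such that δ = u·a + v·b. -/

import Mathlib

/-- Inner lemma: prime power case after dividing by the gcd. -/
lemma inner_lemma (p : ℕ) (hp : p.Prime) (hpodd : Odd p) (j k : ℕ) (hj : 1 ≤ j)
    (a b c : ℤ) (ha : ¬ (p:ℤ) ∣ a) (hc : ¬ (p:ℤ) ∣ c) :
    ∃ u v : ℤ, IsCoprime u ((p:ℤ)^k) ∧ IsCoprime v ((p:ℤ)^k) ∧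
      (p:ℤ)^j ∣ u*a + v*b - c := by
  have hpZ : Prime (p:ℤ) := Nat.prime_iff_prime_int.mp hp
  have hp2 : ¬ ((p:ℤ) ∣ 2) := by
    intro h4
    have h5 : p ∣ 2 := by exact_mod_cast h4
    have : p = 2 := (Nat.prime_dvd_prime_iff_eq hp Nat.prime_two).mp h5
    rw [this] at hpodd
    simp [Nat.odd_iff] at hpodd
  -- choose v in {1, -1} with p ∤ c - v*b
  obtain ⟨v, hv1, hvnd⟩ : ∃ v : ℤ, (v = 1 ∨ v = -1) ∧ ¬ (p:ℤ) ∣ (c - v*b) := by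
    by_cases h1 : (p:ℤ) ∣ (c - b)
    · refine ⟨-1, Or.inr rfl, ?_⟩
      intro h2
      have h3 : (p:ℤ) ∣ 2*c := by
        have hs := dvd_add h1 h2
        have he : (c - b) + (c - (-1)*b) = 2*c := by ring
        rwa [he] at hs
      rcases hpZ.dvd_mul.mp h3 with h4 | h4
      · exact hp2 h4
      · exact hc h4
    · exact ⟨1, Or.inl rfl, by rwa [one_mul]⟩
  -- invert a mod p^j
  have hcop : IsCoprime a ((p:ℤ)^j) :=
    IsCoprime.pow_right (n := j) ((hpZ.coprime_iff_not_dvd.mpr ha).symm)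
  obtain ⟨x, y, hxy⟩ := hcop
  refine ⟨(c - v*b) * x, v, ?_, ?_, ?_⟩
  · -- coprimality of u
    have hpx : ¬ (p:ℤ) ∣ x := by
      intro hdx
      have : (p:ℤ) ∣ 1 := by
        rw [← hxy]
        exact dvd_add (hdx.mul_right a) ((dvd_pow_self (p:ℤ) (by omega : j ≠ 0)).mul_left y)
      exact hpZ.not_dvd_one this
    have : ¬ (p:ℤ) ∣ (c - v*b) * x := by
      intro hd
      rcases hpZ.dvd_mul.mp hd with h | h
      · exact hvnd h
      · exact hpx h
    exact IsCoprime.pow_right (n := k) ((hpZ.coprime_iff_not_dvd.mpr this).symm)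
  · rcases hv1 with rfl | rfl
    · exact isCoprime_one_left
    · exact isCoprime_one_left.neg_left
  · -- divisibility
    refine ⟨-(c - v*b) * y, ?_⟩
    have : x * a = 1 - y * (p:ℤ)^j := by linarith [hxy]
    calc (c - v*b) * x * a + v * b - c = (c - v*b) * (x * a) + v * b - c := by ring
      _ = (c - v*b) * (1 - y * (p:ℤ)^j) + v * b - c := by rw [this]
      _ = (p:ℤ)^j * (-(c - v*b) * y) := by ring

/-- gcd with a divisor descends. -/
lemma gcd_descend (x : ℤ) (m N : ℕ) (h : m ∣ N) :
    Int.gcd x m = Nat.gcd (Int.gcd x N) m := by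
  rw [Int.gcd, Int.gcd, Int.natAbs_natCast, Int.natAbs_natCast, Nat.gcd_assoc,
    Nat.gcd_comm N m, Nat.gcd_eq_left h]

lemma coprime_of_congr {u u₁ : ℤ} {m : ℕ} (h : IsCoprime u₁ (m:ℤ)) (hd : (m:ℤ) ∣ u - u₁) :
    IsCoprime u (m:ℤ) := by
  obtain ⟨t, ht⟩ := hd
  obtain ⟨x, y, hxy⟩ := h
  exact ⟨x, y - x*t, by linear_combination hxy + x*ht⟩

theorem key_lemma : ∀ n : ℕ, Odd n → ∀ a b c : ℤ,
    Int.gcd c n = Int.gcd ((Int.gcd a b : ℕ) : ℤ) n →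
    ∃ u v : ℤ, IsCoprime u (n:ℤ) ∧ IsCoprime v (n:ℤ) ∧ (n:ℤ) ∣ u*a + v*b - c := by
  intro n
  induction n using Nat.recOnPosPrimePosCoprime with
  | zero => intro h; simp [Nat.odd_iff] at h
  | one =>
      intro _ a b c _
      exact ⟨1, 1, isCoprime_one_left, isCoprime_one_left, by simp⟩
  | prime_pow p k hpp hk =>
      intro hoddpk a b c hgcd
      have hp' : p.Prime := hpp
      have hpodd : Odd p := by
        by_contra h
        have he : Even p := Nat.not_odd_iff_even.mp h
        exact (Nat.not_odd_iff_even.mpr (Nat.even_pow.mpr ⟨he, by omega⟩)) hoddpk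
      have hpZ : Prime (p:ℤ) := Nat.prime_iff_prime_int.mp hp'
      set G : ℕ := Int.gcd ((Int.gcd a b : ℕ) : ℤ) ((p^k : ℕ) : ℤ) with hGdef
      have hGdvd : G ∣ p^k := by
        have h := (Int.gcd_dvd_right _ _ : ((G:ℕ):ℤ) ∣ ((p^k : ℕ) : ℤ))
        exact_mod_cast h
      obtain ⟨e, hek, hGe⟩ := (Nat.dvd_prime_pow hp').mp hGdvd
      have hGa : (G:ℤ) ∣ a :=
        dvd_trans (Int.gcd_dvd_left _ _) (Int.gcd_dvd_left _ _)
      have hGb : (G:ℤ) ∣ b :=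
        dvd_trans (Int.gcd_dvd_left _ _) (Int.gcd_dvd_right _ _)
      have hGc : (G:ℤ) ∣ c := by
        rw [← hgcd]
        exact (Int.gcd_dvd_left _ _)
      obtain ⟨a', ha'⟩ := hGa
      obtain ⟨b', hb'⟩ := hGb
      obtain ⟨c', hc'⟩ := hGc
      have hGpos : 0 < G := by
        rw [hGe]; exact Nat.pow_pos (n := e) hp'.pos
      by_cases hekk : e = k
      · -- G = p^k, everything divisible
        refine ⟨1, 1, isCoprime_one_left, isCoprime_one_left, ?_⟩
        have : ((p^k : ℕ) : ℤ) = (G : ℤ) := by rw [hGe, hekk]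
        rw [this, ha', hb', hc']
        exact ⟨a' + b' - c', by ring⟩
      · -- e < k
        have hlt : e < k := lt_of_le_of_ne hek hekk
        set j := k - e with hjdef
        have hj1 : 1 ≤ j := by omega
        have hsplit : p ^ k = G * p ^ j := by
          rw [hGe, ← pow_add]; congr 1; omega
        -- gcd c' (p^j) = 1
        have hgcd_c' : Int.gcd c' ((p^j : ℕ) : ℤ) = 1 := by
          have h1 : Int.gcd c ((p^k : ℕ) : ℤ) = G := hgcd
          rw [hc', hsplit] at h1
          rw [Nat.cast_mul] at h1
          rw [Int.gcd_mul_left] at h1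
          simp only [Int.natAbs_natCast] at h1
          exact Nat.eq_of_mul_eq_mul_left hGpos (by rw [h1, mul_one])
        have hc'nd : ¬ (p:ℤ) ∣ c' := by
          intro hdc
          have hdq : (p:ℤ) ∣ ((p^j : ℕ) : ℤ) := by
            push_cast
            exact dvd_pow_self _ (by omega)
          have h2 : (p:ℤ) ∣ ((Int.gcd c' ((p^j : ℕ) : ℤ) : ℕ) : ℤ) := Int.dvd_coe_gcd hdc hdq
          rw [hgcd_c'] at h2
          exact hpZ.not_dvd_one (by exact_mod_cast h2)
        -- gcd (gcd a' b') (p^j) = 1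
        have hgcd_ab' : Int.gcd ((Int.gcd a' b' : ℕ) : ℤ) ((p^j : ℕ) : ℤ) = 1 := by
          have h1 : Int.gcd ((Int.gcd a b : ℕ) : ℤ) ((p^k : ℕ) : ℤ) = G := rfl
          have hab : Int.gcd a b = G * Int.gcd a' b' := by
            rw [ha', hb', Int.gcd_mul_left]
            simp
          rw [hab, hsplit, Nat.cast_mul, Nat.cast_mul, Int.gcd_mul_left] at h1
          simp only [Int.natAbs_natCast] at h1
          exact Nat.eq_of_mul_eq_mul_left hGpos (by rw [h1, mul_one])
        have hnot_both : ¬ ((p:ℤ) ∣ a' ∧ (p:ℤ) ∣ b') := by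
          rintro ⟨hda, hdb⟩
          have hdg : (p:ℤ) ∣ ((Int.gcd a' b' : ℕ) : ℤ) := Int.dvd_coe_gcd hda hdb
          have hdq : (p:ℤ) ∣ ((p^j : ℕ) : ℤ) := by
            push_cast
            exact dvd_pow_self _ (by omega)
          have h2 := Int.dvd_coe_gcd hdg hdq
          rw [hgcd_ab'] at h2
          exact hpZ.not_dvd_one (by exact_mod_cast h2)
        have hfin : ∀ u v : ℤ, IsCoprime u ((p:ℤ)^k) → IsCoprime v ((p:ℤ)^k) →
            ((p:ℤ)^j ∣ u*a' + v*b' - c') →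
            ∃ u v : ℤ, IsCoprime u (((p^k : ℕ) : ℤ)) ∧ IsCoprime v (((p^k : ℕ) : ℤ)) ∧
              (((p^k : ℕ) : ℤ)) ∣ u*a + v*b - c := by
          intro u v hu hv hdvd
          refine ⟨u, v, by push_cast; exact hu, by push_cast; exact hv, ?_⟩
          have heq : u*a + v*b - c = (G:ℤ) * (u*a' + v*b' - c') := by
            rw [ha', hb', hc']; ring
          rw [heq, hsplit, Nat.cast_mul]
          apply mul_dvd_mul_left
          have : ((p^j : ℕ) : ℤ) = (p:ℤ)^j := by push_cast; ring
          rw [this]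
          exact hdvd
        by_cases hda' : (p:ℤ) ∣ a'
        · -- then p ∤ b'
          have hdb' : ¬ (p:ℤ) ∣ b' := fun h => hnot_both ⟨hda', h⟩
          obtain ⟨u, v, hu, hv, hdvd⟩ := inner_lemma p hp' hpodd j k hj1 b' a' c' hdb' hc'nd
          exact hfin v u hv hu (by convert hdvd using 2; ring)
        · obtain ⟨u, v, hu, hv, hdvd⟩ := inner_lemma p hp' hpodd j k hj1 a' b' c' hda' hc'nd
          exact hfin u v hu hv hdvd
  | coprime m n hm hn hmn ihm ihn =>
      intro hodd a b c hgcd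
      have hoddm : Odd m := (Nat.odd_mul.mp hodd).1
      have hoddn : Odd n := (Nat.odd_mul.mp hodd).2
      have hdm : m ∣ m*n := ⟨n, rfl⟩
      have hdn : n ∣ m*n := ⟨m, mul_comm m n⟩
      have hgm : Int.gcd c (m:ℤ) = Int.gcd ((Int.gcd a b : ℕ) : ℤ) (m:ℤ) := by
        rw [gcd_descend c m (m*n) hdm, gcd_descend _ m (m*n) hdm, hgcd]
      have hgn : Int.gcd c (n:ℤ) = Int.gcd ((Int.gcd a b : ℕ) : ℤ) (n:ℤ) := by
        rw [gcd_descend c n (m*n) hdn, gcd_descend _ n (m*n) hdn, hgcd]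
      obtain ⟨u₁, v₁, hu₁, hv₁, hd₁⟩ := ihm hoddm a b c hgm
      obtain ⟨u₂, v₂, hu₂, hv₂, hd₂⟩ := ihn hoddn a b c hgn
      have hcop : IsCoprime (m:ℤ) (n:ℤ) := Int.isCoprime_iff_gcd_eq_one.mpr
        (by rwa [Int.gcd_natCast_natCast])
      obtain ⟨x, y, hxy⟩ := id hcop
      set u : ℤ := u₁*y*n + u₂*x*m with hudef
      set v : ℤ := v₁*y*n + v₂*x*m with hvdef
      have hum : (m:ℤ) ∣ u - u₁ := ⟨(u₂ - u₁)*x, by linear_combination u₁ * hxy⟩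
      have hun : (n:ℤ) ∣ u - u₂ := ⟨(u₁ - u₂)*y, by linear_combination u₂ * hxy⟩
      have hvm : (m:ℤ) ∣ v - v₁ := ⟨(v₂ - v₁)*x, by linear_combination v₁ * hxy⟩
      have hvn : (n:ℤ) ∣ v - v₂ := ⟨(v₁ - v₂)*y, by linear_combination v₂ * hxy⟩
      refine ⟨u, v, ?_, ?_, ?_⟩
      · have h1 : IsCoprime u (m:ℤ) := coprime_of_congr hu₁ hum
        have h2 : IsCoprime u (n:ℤ) := coprime_of_congr hu₂ hun
        push_cast
        exact h1.mul_right h2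
      · have h1 : IsCoprime v (m:ℤ) := coprime_of_congr hv₁ hvm
        have h2 : IsCoprime v (n:ℤ) := coprime_of_congr hv₂ hvn
        push_cast
        exact h1.mul_right h2
      · have h1 : (m:ℤ) ∣ u*a + v*b - c := by
          have : u*a + v*b - c = (u₁*a + v₁*b - c) + a*(u - u₁) + b*(v - v₁) := by ring
          rw [this]
          exact dvd_add (dvd_add hd₁ (hum.mul_left a)) (hvm.mul_left b)
        have h2 : (n:ℤ) ∣ u*a + v*b - c := by
          have : u*a + v*b - c = (u₂*a + v₂*b - c) + a*(u - u₂) + b*(v - v₂) := by ring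
          rw [this]
          exact dvd_add (dvd_add hd₂ (hun.mul_left a)) (hvn.mul_left b)
        have := hcop.mul_dvd h1 h2
        push_cast
        exact this

theorem stmt_5 (d : ℕ) (hd : 2 ≤ d) (hodd : Odd d) (a b δ : ZMod d)
    (hgcd : Ideal.span {δ} = Ideal.span ({a, b} : Set (ZMod d))) :
    ∃ u v : (ZMod d)ˣ, δ = (u : ZMod d) * a + (v : ZMod d) * b := by
  haveI : NeZero d := ⟨by omega⟩
  have hδmem : δ ∈ Ideal.span ({a, b} : Set (ZMod d)) := by
    rw [← hgcd]; exact Ideal.mem_span_singleton_self δ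
  obtain ⟨s, t, hst⟩ := Ideal.mem_span_pair.mp hδmem
  have hamem : a ∈ Ideal.span ({δ} : Set (ZMod d)) := by
    rw [hgcd]; exact Ideal.subset_span (by simp)
  have hbmem : b ∈ Ideal.span ({δ} : Set (ZMod d)) := by
    rw [hgcd]; exact Ideal.subset_span (by simp)
  obtain ⟨ca, hca⟩ := Ideal.mem_span_singleton'.mp hamem
  obtain ⟨cb, hcb⟩ := Ideal.mem_span_singleton'.mp hbmem
  set A : ℤ := (a.val : ℤ)
  set B : ℤ := (b.val : ℤ)
  set D : ℤ := (δ.val : ℤ)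
  set S : ℤ := (s.val : ℤ)
  set T : ℤ := (t.val : ℤ)
  set CA : ℤ := (ca.val : ℤ)
  set CB : ℤ := (cb.val : ℤ)
  have lift : ∀ x : ZMod d, ((x.val : ℤ) : ZMod d) = x := by
    intro x
    push_cast
    simp [ZMod.natCast_val, ZMod.cast_id]
  have hd1 : (d:ℤ) ∣ (S*A + T*B - D) := by
    rw [← ZMod.intCast_zmod_eq_zero_iff_dvd]
    push_cast
    rw [lift, lift, lift, lift, lift, hst]
    ring
  have hd2 : (d:ℤ) ∣ (CA*D - A) := by
    rw [← ZMod.intCast_zmod_eq_zero_iff_dvd]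
    push_cast
    rw [lift, lift, lift, hca]
    ring
  have hd3 : (d:ℤ) ∣ (CB*D - B) := by
    rw [← ZMod.intCast_zmod_eq_zero_iff_dvd]
    push_cast
    rw [lift, lift, lift, hcb]
    ring
  have hg : Int.gcd D (d:ℤ) = Int.gcd ((Int.gcd A B : ℕ) : ℤ) (d:ℤ) := by
    apply Nat.dvd_antisymm
    · have h1 : ((Int.gcd D (d:ℤ) : ℕ) : ℤ) ∣ A := by
        have hA : A = CA*D - (CA*D - A) := by ring
        rw [hA]
        exact dvd_sub ((Int.gcd_dvd_left _ _).mul_left CA) (dvd_trans (Int.gcd_dvd_right _ _) hd2)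
      have h2 : ((Int.gcd D (d:ℤ) : ℕ) : ℤ) ∣ B := by
        have hB : B = CB*D - (CB*D - B) := by ring
        rw [hB]
        exact dvd_sub ((Int.gcd_dvd_left _ _).mul_left CB) (dvd_trans (Int.gcd_dvd_right _ _) hd3)
      have h3 := Int.dvd_coe_gcd (Int.dvd_coe_gcd h1 h2) (Int.gcd_dvd_right D (d:ℤ))
      exact_mod_cast h3
    · have h1 : ((Int.gcd ((Int.gcd A B : ℕ) : ℤ) (d:ℤ) : ℕ) : ℤ) ∣ D := by
        have hD : D = S*A + T*B - (S*A + T*B - D) := by ring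
        rw [hD]
        have hdA : ((Int.gcd ((Int.gcd A B : ℕ) : ℤ) (d:ℤ) : ℕ) : ℤ) ∣ A :=
          dvd_trans (Int.gcd_dvd_left _ _) (Int.gcd_dvd_left _ _)
        have hdB : ((Int.gcd ((Int.gcd A B : ℕ) : ℤ) (d:ℤ) : ℕ) : ℤ) ∣ B :=
          dvd_trans (Int.gcd_dvd_left _ _) (Int.gcd_dvd_right _ _)
        exact dvd_sub (dvd_add (hdA.mul_left S) (hdB.mul_left T))
          (dvd_trans (Int.gcd_dvd_right _ _) hd1)
      have h3 := Int.dvd_coe_gcd h1 (Int.gcd_dvd_right ((Int.gcd A B : ℕ) : ℤ) (d:ℤ))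
      exact_mod_cast h3
  obtain ⟨u, v, hu, hv, hdvd⟩ := key_lemma d hodd A B D hg
  have unitify : ∀ w : ℤ, IsCoprime w (d:ℤ) → IsUnit ((w : ZMod d)) := by
    rintro w ⟨x, y, hxy⟩
    apply IsUnit.of_mul_eq_one ((x : ℤ) : ZMod d)
    have h : ((x*w + y*d : ℤ) : ZMod d) = ((1 : ℤ) : ZMod d) := by rw [hxy]
    push_cast at h
    rw [ZMod.natCast_self] at h
    rw [mul_comm]
    simpa using h
  refine ⟨(unitify u hu).unit, (unitify v hv).unit, ?_⟩
  simp only [IsUnit.unit_spec]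
  have h0 : ((u*A + v*B - D : ℤ) : ZMod d) = 0 :=
    (ZMod.intCast_zmod_eq_zero_iff_dvd _ d).mpr hdvd
  push_cast at h0
  rw [lift, lift, lift] at h0
  have := sub_eq_zero.mp h0
  linear_combination -this
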